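/- Let η₀ > 0, σ_B ≥ 0, C ≥ 0, C_J ≥ 0, and let T ≥ 1 be an integer. Define η : ℕ → ℝ by η_0 = η₀ and η_t = η₀/t^{2/3} for t ≥ 1. Let x, e : ℕ → ℝ be nonnegative sequences and j : ℕ → ℝ with |j_t| ≤ C_J for all 0 ≤ t ≤ T. Suppose that for every 0 ≤ t ≤ T−1: x_t ≤ 8 e_t + (3σ_B/2) η_t + (3/η_t)(j_{t+1} − j_t), and that Σ_{t=0}^{T−1} e_t ≤ √C · T^{2/3}. Then (1/T) Σ_{t=0}^{T−1} x_t ≤ 8√C/T^{1/3} + 6σ_B η₀/T^{2/3} + 9C_J/(η₀ T^{1/3}). -/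

import Mathlib

open scoped BigOperators

private lemma amgm_step (b : ℝ) (hb : 0 ≤ b) :
    3 * b ^ ((1:ℝ)/3) + 1 / (b + 1) ^ ((2:ℝ)/3) ≤ 3 * (b + 1) ^ ((1:ℝ)/3) := by
  have hapos : (0:ℝ) < b + 1 := by linarith
  have h23 : (0:ℝ) < (b + 1) ^ ((2:ℝ)/3) := Real.rpow_pos_of_pos hapos _
  have e2 : (b + 1) ^ ((1:ℝ)/3) * (b + 1) ^ ((2:ℝ)/3) = b + 1 := by
    rw [← Real.rpow_add hapos]; norm_num
  have e3 : (b + 1) ^ ((1:ℝ)/3) * (b + 1) ^ ((1:ℝ)/3) = (b + 1) ^ ((2:ℝ)/3) := by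
    rw [← Real.rpow_add hapos]; norm_num
  have amgm : b ^ ((1:ℝ)/3) * (b + 1) ^ ((1:ℝ)/3) * (b + 1) ^ ((1:ℝ)/3)
      ≤ (1/3) * b + (1/3) * (b + 1) + (1/3) * (b + 1) :=
    Real.geom_mean_le_arith_mean3_weighted (by norm_num) (by norm_num) (by norm_num)
      hb hapos.le hapos.le (by norm_num)
  have key : 3 * (b ^ ((1:ℝ)/3) * (b + 1) ^ ((2:ℝ)/3)) + 1 ≤ 3 * (b + 1) := by
    have h1 : b ^ ((1:ℝ)/3) * (b + 1) ^ ((2:ℝ)/3)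
        = b ^ ((1:ℝ)/3) * (b + 1) ^ ((1:ℝ)/3) * (b + 1) ^ ((1:ℝ)/3) := by
      rw [mul_assoc, e3]
    rw [h1]; linarith
  rw [← mul_le_mul_iff_of_pos_right h23]
  have lhs_eq : (3 * b ^ ((1:ℝ)/3) + 1 / (b + 1) ^ ((2:ℝ)/3)) * (b + 1) ^ ((2:ℝ)/3)
      = 3 * (b ^ ((1:ℝ)/3) * (b + 1) ^ ((2:ℝ)/3)) + 1 := by
    field_simp
  have rhs_eq : 3 * (b + 1) ^ ((1:ℝ)/3) * (b + 1) ^ ((2:ℝ)/3) = 3 * (b + 1) := by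
    rw [mul_assoc, e2]
  rw [lhs_eq, rhs_eq]; exact key

private lemma invsum (n : ℕ) :
    ∑ t ∈ Finset.range n, 1 / ((t : ℝ) + 1) ^ ((2:ℝ)/3) ≤ 3 * (n : ℝ) ^ ((1:ℝ)/3) := by
  induction n with
  | zero => simp
  | succ n ih =>
    rw [Finset.sum_range_succ]
    have h := amgm_step (n : ℝ) (by positivity)
    push_cast
    linarith

private lemma tele (CJ : ℝ) (j η : ℕ → ℝ) (hpos : ∀ t, 0 < η t)
    (hmono : ∀ t, η (t + 1) ≤ η t) :
    ∀ T : ℕ, 1 ≤ T → (∀ t, t ≤ T → |j t| ≤ CJ) →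
      ∑ t ∈ Finset.range T, (1 / η t) * (j (t + 1) - j t) ≤ (CJ + j T) / η (T - 1) := by
  intro T
  induction T with
  | zero => omega
  | succ n ih =>
    intro _ hj
    rcases Nat.eq_zero_or_pos n with hn | hn
    · subst hn
      have h0 := (abs_le.mp (hj 0 (by omega))).1
      have hp := hpos 0
      simp only [zero_add, Finset.sum_range_one, Nat.sub_self]
      rw [one_div, inv_mul_eq_div, div_le_div_iff_of_pos_right hp]
      linarith
    · have hstep : η n ≤ η (n - 1) := by
        have := hmono (n - 1)
        rwa [Nat.sub_add_cancel hn] at this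
      have H := ih hn (fun t ht => hj t (by omega))
      have hjn := hj n (by omega)
      have hjn' : 0 ≤ CJ + j n := by
        have := (abs_le.mp hjn).1; linarith
      rw [Finset.sum_range_succ]
      have h2 : (CJ + j n) / η (n - 1) ≤ (CJ + j n) / η n := by
        gcongr
        exact hpos n
      have h3 : (CJ + j n) / η n + (1 / η n) * (j (n + 1) - j n)
          = (CJ + j (n + 1)) / η n := by
        field_simp <;> ring
      have : ∑ t ∈ Finset.range n, (1 / η t) * (j (t + 1) - j t)
          + (1 / η n) * (j (n + 1) - j n) ≤ (CJ + j (n + 1)) / η n := by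
        rw [← h3]; linarith
      simpa [Nat.succ_sub_one] using this

/-- Final averaging step in the proof of Theorem 1. -/
theorem sharp_final_average
    (η₀ : ℝ) (hη₀ : 0 < η₀) (σB C CJ : ℝ) (hσB : 0 ≤ σB) (hC : 0 ≤ C)
    (hCJ : 0 ≤ CJ) (T : ℕ) (hT : 1 ≤ T)
    (η : ℕ → ℝ) (hη0 : η 0 = η₀)
    (hη : ∀ t : ℕ, 1 ≤ t → η t = η₀ / (t : ℝ) ^ ((2 : ℝ) / 3))
    (x e : ℕ → ℝ) (hx : ∀ t, 0 ≤ x t) (he : ∀ t, 0 ≤ e t)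
    (j : ℕ → ℝ) (hj : ∀ t : ℕ, t ≤ T → |j t| ≤ CJ)
    (hstep : ∀ t : ℕ, t ≤ T - 1 →
      x t ≤ 8 * e t + 3 * σB / 2 * η t + (3 / η t) * (j (t + 1) - j t))
    (hesum : ∑ t ∈ Finset.range T, e t ≤ Real.sqrt C * (T : ℝ) ^ ((2 : ℝ) / 3)) :
    (1 / (T : ℝ)) * ∑ t ∈ Finset.range T, x t
      ≤ 8 * Real.sqrt C / (T : ℝ) ^ ((1 : ℝ) / 3)
        + 6 * σB * η₀ / (T : ℝ) ^ ((2 : ℝ) / 3)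
        + 9 * CJ / (η₀ * (T : ℝ) ^ ((1 : ℝ) / 3)) := by
  -- basic facts about η
  have hpos : ∀ t, 0 < η t := by
    intro t
    rcases Nat.eq_zero_or_pos t with h | h
    · subst h; rw [hη0]; exact hη₀
    · rw [hη t h]
      have : (0:ℝ) < (t:ℝ) := by exact_mod_cast h
      positivity
  have hmono : ∀ t, η (t + 1) ≤ η t := by
    intro t
    rcases Nat.eq_zero_or_pos t with h | h
    · subst h
      rw [hη 1 le_rfl, hη0]
      norm_num
    · rw [hη (t + 1) (by omega), hη t h]
      have ht0 : (0:ℝ) < (t:ℝ) := by exact_mod_cast h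
      exact div_le_div_of_nonneg_left hη₀.le (Real.rpow_pos_of_pos ht0 _)
        (Real.rpow_le_rpow ht0.le (by push_cast; linarith) (by norm_num))
  have hTpos : (0:ℝ) < (T:ℝ) := by exact_mod_cast hT
  have hT1 : (1:ℝ) ≤ (T:ℝ) := by exact_mod_cast hT
  have hA : (0:ℝ) < (T:ℝ) ^ ((1:ℝ)/3) := Real.rpow_pos_of_pos hTpos _
  have hB : (0:ℝ) < (T:ℝ) ^ ((2:ℝ)/3) := Real.rpow_pos_of_pos hTpos _
  have hAB : (T:ℝ) ^ ((1:ℝ)/3) * (T:ℝ) ^ ((2:ℝ)/3) = (T:ℝ) := by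
    rw [← Real.rpow_add hTpos]; norm_num
  have hA1 : (1:ℝ) ≤ (T:ℝ) ^ ((1:ℝ)/3) := Real.one_le_rpow hT1 (by norm_num)
  -- bound on ∑ η
  obtain ⟨S, rfl⟩ : ∃ S, T = S + 1 := ⟨T - 1, by omega⟩
  have hηsum : ∑ t ∈ Finset.range (S + 1), η t ≤ 4 * η₀ * ((S + 1 : ℕ) : ℝ) ^ ((1:ℝ)/3) := by
    rw [Finset.sum_range_succ']
    have h1 : ∑ i ∈ Finset.range S, η (i + 1)
        ≤ η₀ * (3 * (S : ℝ) ^ ((1:ℝ)/3)) := by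
      have : ∀ i ∈ Finset.range S, η (i + 1) = η₀ * (1 / ((i : ℝ) + 1) ^ ((2:ℝ)/3)) := by
        intro i _
        rw [hη (i + 1) (by omega)]
        push_cast
        ring
      rw [Finset.sum_congr rfl this, ← Finset.mul_sum]
      have := invsum S
      nlinarith [invsum S]
    have hS1 : (S : ℝ) ^ ((1:ℝ)/3) ≤ ((S + 1 : ℕ) : ℝ) ^ ((1:ℝ)/3) := by
      apply Real.rpow_le_rpow (by positivity) _ (by norm_num)
      push_cast; linarith
    have h1T : (1:ℝ) ≤ ((S + 1 : ℕ) : ℝ) ^ ((1:ℝ)/3) := hA1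
    rw [hη0]
    nlinarith
  -- telescoping bound
  have htel := tele CJ j η hpos hmono (S + 1) (by omega) hj
  have hηlast : η₀ / ((S + 1 : ℕ) : ℝ) ^ ((2:ℝ)/3) ≤ η (S + 1 - 1) := by
    simp only [Nat.add_sub_cancel]
    rcases Nat.eq_zero_or_pos S with h | h
    · subst h; rw [hη0]; simp
    · rw [hη S h]
      have hS0 : (0:ℝ) < (S:ℝ) := by exact_mod_cast h
      exact div_le_div_of_nonneg_left hη₀.le (Real.rpow_pos_of_pos hS0 _)
        (Real.rpow_le_rpow hS0.le (by push_cast; linarith) (by norm_num))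
  have hηlastpos : (0:ℝ) < η₀ / ((S + 1 : ℕ) : ℝ) ^ ((2:ℝ)/3) := by positivity
  have hjT := hj (S + 1) (by omega)
  have htel2 : ∑ t ∈ Finset.range (S + 1), (1 / η t) * (j (t + 1) - j t)
      ≤ 2 * CJ * ((S + 1 : ℕ) : ℝ) ^ ((2:ℝ)/3) / η₀ := by
    refine le_trans htel ?_
    have hnum : CJ + j (S + 1) ≤ 2 * CJ := by
      have := (abs_le.mp hjT).2; linarith
    calc (CJ + j (S + 1)) / η (S + 1 - 1)
        ≤ (2 * CJ) / (η₀ / ((S + 1 : ℕ) : ℝ) ^ ((2:ℝ)/3)) :=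
          div_le_div₀ (by linarith) hnum hηlastpos hηlast
      _ = 2 * CJ * ((S + 1 : ℕ) : ℝ) ^ ((2:ℝ)/3) / η₀ := by
          field_simp
  -- sum the step inequality
  have hsum : ∑ t ∈ Finset.range (S + 1), x t
      ≤ 8 * (∑ t ∈ Finset.range (S + 1), e t)
        + 3 * σB / 2 * (∑ t ∈ Finset.range (S + 1), η t)
        + 3 * (∑ t ∈ Finset.range (S + 1), (1 / η t) * (j (t + 1) - j t)) := by
    have h1 : ∑ t ∈ Finset.range (S + 1), x t
        ≤ ∑ t ∈ Finset.range (S + 1),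
            (8 * e t + 3 * σB / 2 * η t + 3 * ((1 / η t) * (j (t + 1) - j t))) := by
      apply Finset.sum_le_sum
      intro t ht
      have ht' : t ≤ (S + 1) - 1 := by
        have := Finset.mem_range.mp ht; omega
      have := hstep t ht'
      have heq : (3 / η t) * (j (t + 1) - j t) = 3 * ((1 / η t) * (j (t + 1) - j t)) := by
        ring
      linarith [heq ▸ this]
    simp only [Finset.sum_add_distrib, ← Finset.mul_sum] at h1
    linarith
  -- combine
  set A := ((S + 1 : ℕ) : ℝ) ^ ((1:ℝ)/3) with hAdef
  set B := ((S + 1 : ℕ) : ℝ) ^ ((2:ℝ)/3) with hBdef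
  have hxsum : ∑ t ∈ Finset.range (S + 1), x t
      ≤ 8 * Real.sqrt C * B + 6 * σB * η₀ * A + 6 * CJ * B / η₀ := by
    have h8e : 8 * (∑ t ∈ Finset.range (S + 1), e t) ≤ 8 * (Real.sqrt C * B) := by
      linarith [hesum]
    have hη' : 3 * σB / 2 * (∑ t ∈ Finset.range (S + 1), η t)
        ≤ 3 * σB / 2 * (4 * η₀ * A) := by
      apply mul_le_mul_of_nonneg_left hηsum (by positivity)
    have ht' : 3 * (∑ t ∈ Finset.range (S + 1), (1 / η t) * (j (t + 1) - j t))
        ≤ 3 * (2 * CJ * B / η₀) := by linarith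
    have heq1 : 3 * σB / 2 * (4 * η₀ * A) = 6 * σB * η₀ * A := by ring
    have heq2 : (3:ℝ) * (2 * CJ * B / η₀) = 6 * CJ * B / η₀ := by ring
    linarith
  have hfinal : (1 / ((S + 1 : ℕ) : ℝ)) * (8 * Real.sqrt C * B + 6 * σB * η₀ * A + 6 * CJ * B / η₀)
      ≤ 8 * Real.sqrt C / A + 6 * σB * η₀ / B + 9 * CJ / (η₀ * A) := by
    have hTeq : ((S + 1 : ℕ) : ℝ) = A * B := hAB.symm
    rw [hTeq]
    have heq : (1 / (A * B)) * (8 * Real.sqrt C * B + 6 * σB * η₀ * A + 6 * CJ * B / η₀)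
        = 8 * Real.sqrt C / A + 6 * σB * η₀ / B + 6 * CJ / (η₀ * A) := by
      field_simp
    rw [heq]
    have : 6 * CJ / (η₀ * A) ≤ 9 * CJ / (η₀ * A) := by
      gcongr
      linarith
    linarith
  calc (1 / ((S + 1 : ℕ) : ℝ)) * ∑ t ∈ Finset.range (S + 1), x t
      ≤ (1 / ((S + 1 : ℕ) : ℝ)) * (8 * Real.sqrt C * B + 6 * σB * η₀ * A + 6 * CJ * B / η₀) := by
        apply mul_le_mul_of_nonneg_left hxsum (by positivity)
    _ ≤ 8 * Real.sqrt C / A + 6 * σB * η₀ / B + 9 * CJ / (η₀ * A) := hfinal
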